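/- For every integer b ≥ 2 and every real R > 1/|f|, the counterclockwise circle integral ∮_{|t|=R} (-Log(1 + 1/(f t)))·(φ_{b-1})'(t) dt equals 0, where (φ_{b-1})' is the formal derivative of the polynomial φ_{b-1} evaluated at t; equivalently, Res_{t=∞}(φ_{-1}(t) dφ_{b-1}(t)) = 0 for all b ≥ 2. -/

import Mathlib

open Polynomial

lemma exists_antideriv (p : Polynomial ℂ) : ∃ P : Polynomial ℂ, P.derivative = p := by
  induction p using Polynomial.induction_on' with
  | add p q hp hq =>
    obtain ⟨P, hP⟩ := hp; obtain ⟨Q, hQ⟩ := hq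
    exact ⟨P + Q, by simp [hP, hQ]⟩
  | monomial n a =>
    refine ⟨C (a / (n + 1)) * X ^ (n + 1), ?_⟩
    rw [derivative_C_mul, derivative_X_pow]
    rw [← C_mul_X_pow_eq_monomial]
    simp only [Nat.add_sub_cancel, ← mul_assoc, ← C_mul]
    push_cast
    rw [div_mul_cancel₀ a (Nat.cast_add_one_ne_zero n)]

/-- For every `b ≥ 2` and `R > 1/|f|`,
`∮_{|t|=R} (-Log(1 + 1/(ft))) · φ_{b-1}'(t) dt = 0`; equivalently,
`Res_{t=∞}(φ_{-1}(t) dφ_{b-1}(t)) = 0` for all `b ≥ 2`. -/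
theorem residue_phi_neg_one_dphi_b (f : ℂ) (hf : f ≠ 0) (hf1 : f ≠ -1)
    (D : Polynomial ℂ → Polynomial ℂ)
    (hD : ∀ p, D p = C ((f + 1)⁻¹) * (X * (X - 1) * (C f * X + 1)) * p.derivative)
    (φ : ℕ → Polynomial ℂ)
    (hφ0 : φ 0 = C ((f + 1)⁻¹) * (X - 1))
    (hφ : ∀ b, φ (b + 1) = D (φ b)) :
    ∀ b : ℕ, 2 ≤ b → ∀ R : ℝ, 1 / ‖f‖ < R →
      (∮ t in C(0, R),
        (-Complex.log (1 + 1 / (f * t))) * ((φ (b - 1)).derivative.eval t)) = 0 := by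
  intro b hb R hR
  obtain ⟨k, rfl⟩ : ∃ k, b = k + 2 := ⟨b - 2, by omega⟩
  have hfabs : (0 : ℝ) < ‖f‖ := by
    simpa using hf
  have hRpos : (0 : ℝ) < R := lt_trans (by positivity) hR
  -- the polynomial q := φ (k+1) and r with q = X * (C f * X + 1) * r
  set q : Polynomial ℂ := φ (k + 1) with hq
  set r : Polynomial ℂ := C ((f + 1)⁻¹) * (X - 1) * (φ k).derivative with hr
  have hqr : q = X * (C f * X + 1) * r := by
    rw [hq, hφ k, hD, hr]; ring
  obtain ⟨P, hP⟩ := exists_antideriv r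
  have hb1 : k + 2 - 1 = k + 1 := by omega
  rw [hb1]
  -- apply the fundamental theorem on the circle
  apply circleIntegral.integral_eq_zero_of_hasDerivWithinAt (f :=
    fun z => -Complex.log (1 + 1 / (f * z)) * q.eval z - P.eval z) hRpos.le
  intro z hz
  have hzabs : ‖z‖ = R := by simpa using hz
  have hz0 : z ≠ 0 := by
    intro h; rw [h, norm_zero] at hzabs; linarith
  have hfz : f * z ≠ 0 := mul_ne_zero hf hz0
  have hfzabs : 1 < ‖f * z‖ := by
    rw [norm_mul, hzabs]
    rw [div_lt_iff₀ hfabs] at hR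
    linarith [mul_comm ‖f‖ R ▸ hR]
  have hinv : ‖1 / (f * z)‖ < 1 := by
    rw [norm_div, norm_one]
    rw [div_lt_one (by linarith)]; exact hfzabs
  have hslit : 1 + 1 / (f * z) ∈ Complex.slitPlane := by
    rw [Complex.mem_slitPlane_iff]
    left
    have h5 := lt_of_le_of_lt (Complex.abs_re_le_norm (1 / (f * z))) hinv
    have h6 := abs_lt.mp h5
    simp only [Complex.add_re, Complex.one_re]
    linarith [h6.1]
  have hfz1 : f * z + 1 ≠ 0 := by
    intro h
    have : f * z = -1 := by linear_combination h
    rw [this] at hfzabs; simp at hfzabs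
  have hne : 1 + 1 / (f * z) ≠ 0 := Complex.slitPlane_ne_zero hslit
  -- derivative of inner function
  have h1 : HasDerivAt (fun w : ℂ => f * w) f z := by
    simpa using (hasDerivAt_id z).const_mul f
  have h2 : HasDerivAt (fun w : ℂ => 1 + 1 / (f * w)) (-f / (f * z) ^ 2) z := by
    simpa [one_div] using (h1.inv hfz).const_add 1
  have h3 : HasDerivAt (fun w : ℂ => Complex.log (1 + 1 / (f * w)))
      ((1 + 1 / (f * z))⁻¹ * (-f / (f * z) ^ 2)) z :=
    HasDerivAt.comp (h₂ := Complex.log) z (Complex.hasDerivAt_log hslit) h2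
  have hlogd : (1 + 1 / (f * z))⁻¹ * (-f / (f * z) ^ 2) = -(1 / (z * (f * z + 1))) := by
    field_simp
  rw [hlogd] at h3
  -- derivative of F
  have h4 : HasDerivAt (fun w => -Complex.log (1 + 1 / (f * w)) * q.eval w - P.eval w)
      ((1 / (z * (f * z + 1))) * q.eval z +
        (-Complex.log (1 + 1 / (f * z))) * q.derivative.eval z - r.eval z) z := by
    have := (h3.neg.mul (q.hasDerivAt z)).sub (P.hasDerivAt z)
    rw [hP] at this
    refine this.congr_deriv ?_
    simp only [Pi.neg_apply]
    ring
  have hqeval : q.eval z = z * (f * z + 1) * r.eval z := by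
    rw [hqr]; simp [eval_mul]
  have hd : (1 / (z * (f * z + 1))) * q.eval z +
      (-Complex.log (1 + 1 / (f * z))) * q.derivative.eval z - r.eval z
      = -Complex.log (1 + 1 / (f * z)) * q.derivative.eval z := by
    rw [hqeval]
    have hz1 : z * (f * z + 1) ≠ 0 := mul_ne_zero hz0 hfz1
    field_simp
    rw [mul_div_cancel_left₀ _ (by rw [mul_comm]; exact hfz1 : z * f + 1 ≠ 0)]; ring
  rw [hd] at h4
  exact h4.hasDerivWithinAt
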